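/- Let (Ω, P) be a probability space, p ≥ 1, and let X, W : Ω → (Fin p → ℝ) be independent random vectors whose coordinates are all square-integrable. Assume E[W_j] = 0 for every j and Cov(W_j, W_k) = Cov(X_j, X_k) for all coordinates j, k, and let τ ≠ 0 be a real number. Define X⁽¹⁾ = X + τ·W and X⁽²⁾ = X − (1/τ)·W. Then for all coordinates j, k one has Cov(X⁽¹⁾_j, X⁽²⁾_k) = 0. -/

import Mathlib

open MeasureTheory ProbabilityTheory

/-- Covariance of two real-valued random variables: `E[UV] - E[U]E[V]`. -/
noncomputable def cov {Ω : Type*} [MeasurableSpace Ω] (P : Measure Ω) (U V : Ω → ℝ) : ℝ :=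
  (∫ ω, U ω * V ω ∂P) - (∫ ω, U ω ∂P) * (∫ ω, V ω ∂P)


private lemma int_mul_of_memL2 {Ω : Type*} [MeasurableSpace Ω] {P : MeasureTheory.Measure Ω}
    {f g : Ω → ℝ} (hf : MeasureTheory.MemLp f 2 P) (hg : MeasureTheory.MemLp g 2 P) :
    MeasureTheory.Integrable (fun ω => f ω * g ω) P := by
  rw [← MeasureTheory.memLp_one_iff_integrable]
  have := hg.smul (φ := f) hf (r := 1)
  exact this

theorem data_fission_zero_covariance
    {Ω : Type*} [MeasurableSpace Ω] (P : Measure Ω) [IsProbabilityMeasure P]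
    (p : ℕ) (hp : 1 ≤ p) (X W : Ω → Fin p → ℝ)
    (hX : Measurable X) (hW : Measurable W)
    (hXW : IndepFun X W P)
    (hX2 : ∀ j, MemLp (fun ω => X ω j) 2 P)
    (hW2 : ∀ j, MemLp (fun ω => W ω j) 2 P)
    (hWmean : ∀ j, (∫ ω, W ω j ∂P) = 0)
    (hcovWX : ∀ j k, cov P (fun ω => W ω j) (fun ω => W ω k)
      = cov P (fun ω => X ω j) (fun ω => X ω k))
    (τ : ℝ) (hτ : τ ≠ 0) :
    ∀ j k, cov P (fun ω => X ω j + τ * W ω j) (fun ω => X ω k - (1 / τ) * W ω k) = 0 := by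
  intro j k
  have hXjW : Integrable (fun ω => X ω j) P := (hX2 j).integrable one_le_two
  have hXkW : Integrable (fun ω => X ω k) P := (hX2 k).integrable one_le_two
  have hWjW : Integrable (fun ω => W ω j) P := (hW2 j).integrable one_le_two
  have hWkW : Integrable (fun ω => W ω k) P := (hW2 k).integrable one_le_two
  have hXX : Integrable (fun ω => X ω j * X ω k) P := int_mul_of_memL2 (hX2 j) (hX2 k)
  have hXWk : Integrable (fun ω => X ω j * W ω k) P := int_mul_of_memL2 (hX2 j) (hW2 k)
  have hWXk : Integrable (fun ω => W ω j * X ω k) P := int_mul_of_memL2 (hW2 j) (hX2 k)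
  have hWW : Integrable (fun ω => W ω j * W ω k) P := int_mul_of_memL2 (hW2 j) (hW2 k)
  -- independence of coordinates
  have hindep1 : IndepFun (fun ω => X ω j) (fun ω => W ω k) P :=
    hXW.comp (measurable_pi_apply j) (measurable_pi_apply k)
  have hindep2 : IndepFun (fun ω => W ω j) (fun ω => X ω k) P :=
    (hXW.symm).comp (measurable_pi_apply j) (measurable_pi_apply k)
  have hI1 : (∫ ω, X ω j * W ω k ∂P) = (∫ ω, X ω j ∂P) * (∫ ω, W ω k ∂P) :=
    hindep1.integral_mul_eq_mul_integral hXjW.aestronglyMeasurable hWkW.aestronglyMeasurable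
  have hI2 : (∫ ω, W ω j * X ω k ∂P) = (∫ ω, W ω j ∂P) * (∫ ω, X ω k ∂P) :=
    hindep2.integral_mul_eq_mul_integral hWjW.aestronglyMeasurable hXkW.aestronglyMeasurable
  have hcov := hcovWX j k
  simp only [cov] at hcov ⊢
  have expand : ∀ ω, (X ω j + τ * W ω j) * (X ω k - 1 / τ * W ω k)
      = X ω j * X ω k - (1/τ) * (X ω j * W ω k) + τ * (W ω j * X ω k)
        - (W ω j * W ω k) := by
    intro ω; field_simp; ring
  rw [integral_congr_ae (Filter.Eventually.of_forall expand)]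
  have e1 : (∫ ω, (X ω j * X ω k - 1 / τ * (X ω j * W ω k) + τ * (W ω j * X ω k)
        - W ω j * W ω k) ∂P)
      = (∫ ω, X ω j * X ω k ∂P) - 1 / τ * (∫ ω, X ω j * W ω k ∂P)
        + τ * (∫ ω, W ω j * X ω k ∂P) - (∫ ω, W ω j * W ω k ∂P) := by
    have hB : Integrable (fun ω => 1 / τ * (X ω j * W ω k)) P := hXWk.const_mul _
    have hC : Integrable (fun ω => τ * (W ω j * X ω k)) P := hWXk.const_mul _
    have hAB : Integrable (fun ω => X ω j * X ω k - 1 / τ * (X ω j * W ω k)) P := hXX.sub hB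
    have hABC : Integrable (fun ω => X ω j * X ω k - 1 / τ * (X ω j * W ω k)
        + τ * (W ω j * X ω k)) P := hAB.add hC
    rw [integral_sub hABC hWW, integral_add hAB hC, integral_sub hXX hB,
      integral_const_mul, integral_const_mul]
  have e2 : (∫ ω, (X ω j + τ * W ω j) ∂P) = ∫ ω, X ω j ∂P := by
    have h1 : Integrable (fun ω => τ * W ω j) P := hWjW.const_mul _
    rw [integral_add hXjW h1, integral_const_mul, hWmean j]; ring
  have e3 : (∫ ω, (X ω k - 1 / τ * W ω k) ∂P) = ∫ ω, X ω k ∂P := by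
    have h1 : Integrable (fun ω => 1 / τ * W ω k) P := hWkW.const_mul _
    rw [integral_sub hXkW h1, integral_const_mul, hWmean k]; ring
  rw [e1, e2, e3, hI1, hI2, hWmean j, hWmean k]
  simp only [hWmean j, hWmean k, mul_zero, zero_mul, sub_zero] at hcov
  linarith
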